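/- Consider a sequence of content cachings at a single node with capacity D > 0, content sizes r_j > 0, relative loads λ_j = (∑_{k<j, k cached} r_k)/D, and costs C_j = D(μ^{λ_j}-1) with μ > 1. Suppose each cached content j satisfies the admission condition s_j ≥ (r_j/D)·C_j (saving at least cost) and s_j ≥ r_j, and r_j/D ≤ 1/log2(μ). Then 2·log2(μ)·∑_{j cached} s_j ≥ C_{final}, where C_{final} is the cost after all cachings. -/

import Mathlib

lemma two_rpow_le (t : ℝ) (h0 : 0 ≤ t) (h1 : t ≤ 1) : (2:ℝ) ^ t ≤ 1 + t := by
  have h := convexOn_exp.2 (Set.mem_univ (0:ℝ)) (Set.mem_univ (Real.log 2))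
    (by linarith : (0:ℝ) ≤ 1 - t) h0 (by ring)
  simp only [smul_eq_mul, mul_zero, zero_add, Real.exp_zero, Real.exp_log two_pos,
    mul_one] at h
  rw [Real.rpow_def_of_pos two_pos]
  calc Real.exp (Real.log 2 * t) = Real.exp (t * Real.log 2) := by ring_nf
    _ ≤ (1 - t) + t * 2 := h
    _ = 1 + t := by ring

lemma aux_stmt_6 (D μ : ℝ) (hD : 0 < D) (hμ : 1 < μ) (r s : ℕ → ℝ) :
    ∀ A : Finset ℕ, (∀ j ∈ A, 0 < r j) →
    (∀ j ∈ A, s j ≥ (r j / D) *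
      (D * (μ ^ ((∑ k ∈ (Finset.range j).filter (fun k => k ∈ A), r k) / D) - 1))) →
    (∀ j ∈ A, s j ≥ r j) →
    (∀ j ∈ A, r j / D ≤ 1 / Real.logb 2 μ) →
    2 * Real.logb 2 μ * ∑ j ∈ A, s j ≥ D * (μ ^ ((∑ k ∈ A, r k) / D) - 1) := by
  have hμ0 : (0:ℝ) < μ := lt_trans one_pos hμ
  have hL : 0 < Real.logb 2 μ := Real.logb_pos one_lt_two hμ
  set L := Real.logb 2 μ with hLdef
  intro A
  induction A using Finset.strongInductionOn with
  | _ A ih =>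
    intro hr hadm hs hrD
    rcases A.eq_empty_or_nonempty with hAe | hAne
    · subst hAe
      simp
    · set j := A.max' hAne with hjdef
      have hjA : j ∈ A := A.max'_mem hAne
      set B := A.erase j with hBdef
      have hBsub : B ⊂ A := Finset.erase_ssubset hjA
      have hBlt : ∀ k ∈ B, k < j := by
        intro k hk
        rcases Finset.mem_erase.mp hk with ⟨hne, hkA⟩
        exact lt_of_le_of_ne (A.le_max' k hkA) hne
      have hfilA : (Finset.range j).filter (fun k => k ∈ A) = B := by
        ext k
        simp only [Finset.mem_filter, Finset.mem_range, hBdef, Finset.mem_erase]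
        constructor
        · rintro ⟨hk, hkA⟩; exact ⟨Nat.ne_of_lt hk, hkA⟩
        · rintro ⟨hne, hkA⟩; exact ⟨lt_of_le_of_ne (A.le_max' k hkA) hne, hkA⟩
      have hfilB : ∀ j' ∈ B, (Finset.range j').filter (fun k => k ∈ B)
          = (Finset.range j').filter (fun k => k ∈ A) := by
        intro j' hj'
        ext k
        simp only [Finset.mem_filter, Finset.mem_range, hBdef, Finset.mem_erase]
        constructor
        · rintro ⟨hk, _, hkA⟩; exact ⟨hk, hkA⟩
        · rintro ⟨hk, hkA⟩
          exact ⟨hk, Nat.ne_of_lt (lt_trans hk (hBlt j' hj')), hkA⟩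
      have ihB := ih B hBsub
        (fun k hk => hr k (Finset.mem_of_mem_erase hk))
        (fun k hk => by
          rw [hfilB k hk]; exact hadm k (Finset.mem_of_mem_erase hk))
        (fun k hk => hs k (Finset.mem_of_mem_erase hk))
        (fun k hk => hrD k (Finset.mem_of_mem_erase hk))
      -- notation
      set SB := ∑ k ∈ B, r k with hSB
      have hSBnn : 0 ≤ SB :=
        Finset.sum_nonneg fun k hk => (hr k (Finset.mem_of_mem_erase hk)).le
      set x := r j / D with hx
      have hx0 : 0 < x := div_pos (hr j hjA) hD
      have hxL : L * x ≤ 1 := by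
        have := hrD j hjA
        rw [ge_iff_le, ← hx] at * <;> try skip
        calc L * x ≤ L * (1 / L) := by
              exact mul_le_mul_of_nonneg_left (hrD j hjA) hL.le
          _ = 1 := by field_simp
      -- μ ^ x ≤ 1 + L * x
      have hmux : μ ^ x ≤ 1 + L * x := by
        have h2 : μ = (2:ℝ) ^ L := (Real.rpow_logb two_pos (by norm_num) hμ0).symm
        calc μ ^ x = ((2:ℝ) ^ L) ^ x := by rw [← h2]
          _ = (2:ℝ) ^ (L * x) := by
              rw [← Real.rpow_mul (by norm_num : (0:ℝ) ≤ 2)]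
          _ ≤ 1 + L * x := two_rpow_le _ (mul_nonneg hL.le hx0.le) hxL
      have hμSB : 0 < μ ^ (SB / D) := Real.rpow_pos_of_pos hμ0 _
      -- admission for j, with filter rewritten
      have hadmj : s j ≥ x * (D * (μ ^ (SB / D) - 1)) := by
        have := hadm j hjA
        rwa [hfilA] at this
      have hsj : s j ≥ r j := hs j hjA
      -- cost step bound
      have hsum : ∑ k ∈ A, r k = SB + r j := by
        rw [hSB, hBdef, Finset.sum_erase_add A r hjA]
      have hexp : μ ^ ((∑ k ∈ A, r k) / D) = μ ^ (SB / D) * μ ^ x := by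
        rw [hsum, add_div, Real.rpow_add hμ0]
      have hstep : D * (μ ^ ((∑ k ∈ A, r k) / D) - 1)
          ≤ D * (μ ^ (SB / D) - 1) + 2 * L * s j := by
        have h1 : μ ^ (SB / D) * μ ^ x ≤ μ ^ (SB / D) * (1 + L * x) :=
          mul_le_mul_of_nonneg_left hmux hμSB.le
        have hxD : x * D = r j := by rw [hx]; field_simp [hD.ne']
        have h2 : L * (x * (D * (μ ^ (SB / D) - 1))) ≤ L * s j :=
          mul_le_mul_of_nonneg_left hadmj hL.le
        have h3 : L * r j ≤ L * s j := mul_le_mul_of_nonneg_left hsj hL.le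
        have key : D * (μ ^ (SB / D) * (1 + L * x)) - D
            = D * (μ ^ (SB / D) - 1) + L * (x * (D * (μ ^ (SB / D) - 1))) + L * (x * D) := by
          ring
        calc D * (μ ^ ((∑ k ∈ A, r k) / D) - 1)
            = D * (μ ^ (SB / D) * μ ^ x) - D := by rw [hexp]; ring
          _ ≤ D * (μ ^ (SB / D) * (1 + L * x)) - D := by nlinarith [hD.le]
          _ = D * (μ ^ (SB / D) - 1) + L * (x * (D * (μ ^ (SB / D) - 1))) + L * (x * D) := key
          _ ≤ D * (μ ^ (SB / D) - 1) + L * s j + L * s j := by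
              rw [hxD]; linarith
          _ = D * (μ ^ (SB / D) - 1) + 2 * L * s j := by ring
      have hsumS : ∑ k ∈ A, s k = (∑ k ∈ B, s k) + s j := by
        rw [hBdef, Finset.sum_erase_add A s hjA]
      rw [ge_iff_le, hsumS]
      calc D * (μ ^ ((∑ k ∈ A, r k) / D) - 1)
          ≤ D * (μ ^ (SB / D) - 1) + 2 * L * s j := hstep
        _ ≤ 2 * L * (∑ k ∈ B, s k) + 2 * L * s j := by linarith [ihB]
        _ = 2 * L * ((∑ k ∈ B, s k) + s j) := by ring

/-- Single-node Lemma 1: if every cached content satisfies the admission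
condition (saving at least the cost at its insertion load), saving at least
its size, and has size at most `D / log2 μ`, then twice `log2 μ` times the
total saving dominates the final cost. -/
theorem stmt_6 (D μ : ℝ) (hD : 0 < D) (hμ : 1 < μ) (N : ℕ) (r s : ℕ → ℝ)
    (A : Finset ℕ) (hA : A ⊆ Finset.range N) (hr : ∀ j ∈ A, 0 < r j)
    (hadm : ∀ j ∈ A, s j ≥ (r j / D) *
      (D * (μ ^ ((∑ k ∈ (Finset.range j).filter (fun k => k ∈ A), r k) / D) - 1)))
    (hs : ∀ j ∈ A, s j ≥ r j)
    (hrD : ∀ j ∈ A, r j / D ≤ 1 / Real.logb 2 μ) :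
    2 * Real.logb 2 μ * ∑ j ∈ A, s j ≥ D * (μ ^ ((∑ k ∈ A, r k) / D) - 1) := by
  exact aux_stmt_6 D μ hD hμ r s A hr hadm hs hrD
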